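/- Let □ ⊆ ℝ² be a square of side length ε ≤ 0.1 with center o, let R ⊆ □ be a nonempty compact set, and let D be the closed unit disk. Then the map π : ∂(R ⊕ D) → S¹ defined by π(p) = (p − o)/‖p − o‖ is a homeomorphism between the boundary of R ⊕ D and the unit circle. -/

import Mathlib

open scoped Pointwise
noncomputable section

abbrev Pt := EuclideanSpace ℝ (Fin 2)

/-- The closed unit disk centered at the origin. -/
def unitDisk : Set Pt := Metric.closedBall 0 1

/-- Let `□ ⊆ ℝ²` be a square of side length `ε ≤ 0.1` with center `o`,
let `R ⊆ □` be a nonempty compact set, and `D` the closed unit disk.  Then the radial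
projection `p ↦ (p - o)/‖p - o‖` is a homeomorphism between `∂(R ⊕ D)` and the unit
circle. -/
theorem stmt5 (ε : ℝ) (hε : 0 < ε) (hε' : ε ≤ 0.1) (o : Pt)
    (Sq : Set Pt) (hSq : Sq = {x : Pt | ∀ i, |x i - o i| ≤ ε / 2})
    (R : Set Pt) (hR : R ⊆ Sq) (hRne : R.Nonempty) (hRcomp : IsCompact R) :
    ∃ h : (frontier (R + unitDisk) : Set Pt) ≃ₜ (Metric.sphere (0 : Pt) 1 : Set Pt),
      ∀ p : (frontier (R + unitDisk) : Set Pt),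
        (h p : Pt) = ‖(p : Pt) - o‖⁻¹ • ((p : Pt) - o) := by
  classical
  set K : Set Pt := R + unitDisk with hKdef
  have hKcomp : IsCompact K := hRcomp.add (isCompact_closedBall 0 1)
  have hKclosed : IsClosed K := hKcomp.isClosed
  -- every point of R is within ε of o
  have hRdist : ∀ r ∈ R, ‖r - o‖ ≤ ε := by
    intro r hr
    have h := hR hr
    rw [hSq] at h
    have h2 : ∀ i, |(r - o) i| ≤ ε / 2 := by
      intro i; simpa using h i
    rw [EuclideanSpace.norm_eq]
    have hsum : (∑ i, ‖(r - o) i‖ ^ 2) ≤ ε ^ 2 := by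
      have hb : ∀ i, ‖(r - o) i‖ ^ 2 ≤ (ε / 2) ^ 2 := by
        intro i
        have := h2 i
        rw [Real.norm_eq_abs]
        nlinarith [abs_nonneg ((r - o) i)]
      calc (∑ i, ‖(r - o) i‖ ^ 2) ≤ ∑ _i : Fin 2, (ε / 2) ^ 2 :=
            Finset.sum_le_sum fun i _ => hb i
        _ = 2 * (ε / 2) ^ 2 := by simp
        _ ≤ ε ^ 2 := by nlinarith
    calc Real.sqrt (∑ i, ‖(r - o) i‖ ^ 2) ≤ Real.sqrt (ε ^ 2) := Real.sqrt_le_sqrt hsum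
      _ = ε := Real.sqrt_sq hε.le
  -- unit balls around points of R are inside K
  have hballK : ∀ r ∈ R, Metric.closedBall r 1 ⊆ K := by
    intro r hr x hx
    have hd : x - r ∈ unitDisk := by
      simp only [unitDisk, Metric.mem_closedBall, dist_zero_right]
      have : dist x r ≤ 1 := Metric.mem_closedBall.mp hx
      simpa [dist_eq_norm] using this
    have := Set.add_mem_add hr hd
    simpa using this
  -- strict star-shapedness
  have hstar : ∀ p ∈ K, ∀ t : ℝ, 0 ≤ t → t < 1 → (1 - t) • o + t • p ∈ interior K := by
    intro p hp t ht0 ht1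
    obtain ⟨r, hr, d, hd, hpd⟩ := hp
    have hdn : ‖d‖ ≤ 1 := by
      simpa [unitDisk, dist_zero_right] using (Metric.mem_closedBall.mp hd)
    have hpB : p ∈ Metric.closedBall r 1 := by
      rw [Metric.mem_closedBall, dist_eq_norm, ← hpd]
      simpa using hdn
    have hoB : o ∈ interior (Metric.closedBall r 1) := by
      rw [interior_closedBall r one_ne_zero, Metric.mem_ball, dist_eq_norm]
      have : ‖o - r‖ = ‖r - o‖ := by rw [norm_sub_rev]
      rw [this]
      calc ‖r - o‖ ≤ ε := hRdist r hr
        _ < 1 := by linarith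
    have := (convex_closedBall r 1).combo_interior_closure_mem_interior hoB
      (subset_closure hpB) (by linarith : (0:ℝ) < 1 - t) ht0 (by ring)
    exact interior_mono (hballK r hr) this
  -- a ball around o lies in the interior of K
  have hball : Metric.ball o 0.8 ⊆ interior K := by
    obtain ⟨r, hr⟩ := hRne
    apply interior_maximal _ Metric.isOpen_ball
    intro x hx
    apply hballK r hr
    rw [Metric.mem_closedBall]
    calc dist x r ≤ dist x o + dist o r := dist_triangle x o r
      _ ≤ 0.8 + ε := by
          have h1 : dist x o < 0.8 := Metric.mem_ball.mp hx
          have h2 : dist o r ≤ ε := by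
            rw [dist_eq_norm, norm_sub_rev]; exact hRdist r hr
          linarith
      _ ≤ 1 := by linarith
  -- frontier points: membership and norm lower bound
  have hfr : ∀ p ∈ frontier K, p ∈ K ∧ (0.8 : ℝ) ≤ ‖p - o‖ := by
    intro p hp
    have hpK : p ∈ K := by
      have := frontier_subset_closure (s := K) hp
      rwa [hKclosed.closure_eq] at this
    refine ⟨hpK, ?_⟩
    by_contra hlt
    push_neg at hlt
    have : p ∈ interior K := hball (by rwa [Metric.mem_ball, dist_eq_norm])
    exact hp.2 this
  -- K is bounded
  have hKbnd : ∀ p ∈ K, ‖p - o‖ ≤ 1.2 := by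
    intro p hp
    obtain ⟨r, hr, d, hd, hpd⟩ := hp
    have hdn : ‖d‖ ≤ 1 := by
      simpa [unitDisk, dist_zero_right] using (Metric.mem_closedBall.mp hd)
    have : p - o = (r - o) + d := by rw [← hpd]; beta_reduce; abel
    rw [this]
    calc ‖(r - o) + d‖ ≤ ‖r - o‖ + ‖d‖ := norm_add_le _ _
      _ ≤ ε + 1 := add_le_add (hRdist r hr) hdn
      _ ≤ 1.2 := by linarith
  -- the radial projection
  have hmem : ∀ p : (frontier K : Set Pt),
      ‖(p : Pt) - o‖⁻¹ • ((p : Pt) - o) ∈ Metric.sphere (0 : Pt) 1 := by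
    intro p
    have h08 := (hfr p p.2).2
    have hne : ‖(p : Pt) - o‖ ≠ 0 := by positivity
    rw [mem_sphere_zero_iff_norm, norm_smul, norm_inv, norm_norm,
      inv_mul_cancel₀ hne]
  set f : ↥(frontier K) → ↥(Metric.sphere (0 : Pt) 1) :=
    fun p => ⟨‖(p : Pt) - o‖⁻¹ • ((p : Pt) - o), hmem p⟩ with hf
  -- key injectivity helper
  have key : ∀ p q : Pt, p ∈ frontier K → q ∈ frontier K → ‖p - o‖ ≤ ‖q - o‖ →
      ‖p - o‖⁻¹ • (p - o) = ‖q - o‖⁻¹ • (q - o) → p = q := by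
    intro p q hp hq hle heq
    have hp8 := (hfr p hp).2
    have hq8 := (hfr q hq).2
    have hap : (0:ℝ) < ‖p - o‖ := by linarith
    have haq : (0:ℝ) < ‖q - o‖ := by linarith
    have hpo : p - o = (‖p - o‖ / ‖q - o‖) • (q - o) := by
      have := congrArg (fun x => ‖p - o‖ • x) heq
      simpa [smul_smul, mul_inv_cancel₀ hap.ne', div_eq_mul_inv] using this
    rcases eq_or_lt_of_le hle with hEq | hlt
    · have : p - o = q - o := by rw [hpo, hEq, div_self haq.ne', one_smul]
      have := congrArg (fun x => x + o) this
      simpa using this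
    · set t : ℝ := ‖p - o‖ / ‖q - o‖ with htdef
      have ht0 : 0 ≤ t := by positivity
      have ht1 : t < 1 := (div_lt_one haq).mpr hlt
      have hcombo : p = (1 - t) • o + t • q := by
        have : (1 - t) • o + t • q = o + t • (q - o) := by
          rw [smul_sub]; module
        rw [this, ← hpo]; abel
      have : p ∈ interior K := by
        rw [hcombo]
        exact hstar q (hfr q hq).1 t ht0 ht1
      exact absurd this hp.2
  have hinj : Function.Injective f := by
    intro p q hpq
    have heq : ‖(p:Pt) - o‖⁻¹ • ((p:Pt) - o) = ‖(q:Pt) - o‖⁻¹ • ((q:Pt) - o) :=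
      congrArg Subtype.val hpq
    rcases le_total ‖(p:Pt) - o‖ ‖(q:Pt) - o‖ with h | h
    · exact Subtype.ext (key _ _ p.2 q.2 h heq)
    · exact Subtype.ext (key _ _ q.2 p.2 h heq.symm).symm
  have hsurj : Function.Surjective f := by
    rintro ⟨u, hu⟩
    rw [mem_sphere_zero_iff_norm] at hu
    set S : Set ℝ := {t : ℝ | o + t • u ∈ K} with hSdef
    have hScl : IsClosed S := by
      have hc : Continuous (fun t : ℝ => o + t • u) :=
        continuous_const.add (continuous_id.smul continuous_const)
      exact hKclosed.preimage hc
    have hhalf : (0.5 : ℝ) ∈ S := by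
      have h05 : o + (0.5 : ℝ) • u ∈ Metric.ball o 0.8 := by
        rw [Metric.mem_ball, dist_eq_norm]
        have h5 : o + (0.5 : ℝ) • u - o = (0.5 : ℝ) • u := by abel
        rw [h5, norm_smul, hu, mul_one, Real.norm_eq_abs,
          abs_of_pos (by norm_num : (0:ℝ) < 0.5)]
        norm_num
      show o + (0.5 : ℝ) • u ∈ K
      exact interior_subset (hball h05)
    have hSbdd : BddAbove S := by
      refine ⟨1.2, fun t ht => ?_⟩
      have := hKbnd _ ht
      have : ‖t • u‖ ≤ 1.2 := by simpa using this
      rw [norm_smul, hu, mul_one] at this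
      exact (le_abs_self t).trans this
    set t₀ : ℝ := sSup S with ht₀
    have ht₀S : t₀ ∈ S := hScl.csSup_mem ⟨0.5, hhalf⟩ hSbdd
    have ht₀5 : (0.5 : ℝ) ≤ t₀ := le_csSup hSbdd hhalf
    set p : Pt := o + t₀ • u with hpdef
    have hpfr : p ∈ frontier K := by
      rw [hKclosed.frontier_eq]
      refine ⟨ht₀S, ?_⟩
      intro hpint
      obtain ⟨δ, hδ0, hδ⟩ := Metric.isOpen_iff.mp isOpen_interior p hpint
      have hmemS : t₀ + δ / 2 ∈ S := by
        have : o + (t₀ + δ / 2) • u ∈ Metric.ball p δ := by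
          rw [Metric.mem_ball, dist_eq_norm]
          have : o + (t₀ + δ / 2) • u - p = (δ / 2) • u := by
            rw [hpdef]; module
          rw [this, norm_smul, hu, mul_one, Real.norm_eq_abs,
            abs_of_pos (by linarith : (0:ℝ) < δ / 2)]
          linarith
        show o + (t₀ + δ / 2) • u ∈ K
        exact interior_subset (hδ this)
      have := le_csSup hSbdd hmemS
      linarith
    have hnorm : ‖p - o‖ = t₀ := by
      have : p - o = t₀ • u := by rw [hpdef]; abel
      rw [this, norm_smul, hu, mul_one, Real.norm_eq_abs, abs_of_pos (by linarith)]
    refine ⟨⟨p, hpfr⟩, ?_⟩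
    apply Subtype.ext
    show ‖p - o‖⁻¹ • (p - o) = u
    have hpo : p - o = t₀ • u := by rw [hpdef]; abel
    rw [hnorm, hpo, smul_smul, inv_mul_cancel₀ (by linarith : t₀ ≠ 0), one_smul]
  have hcont : Continuous f := by
    apply Continuous.subtype_mk
    have h1 : Continuous (fun p : (frontier K : Set Pt) => (p : Pt) - o) :=
      continuous_subtype_val.sub continuous_const
    have h2 : Continuous (fun p : (frontier K : Set Pt) => ‖(p : Pt) - o‖⁻¹) := by
      apply Continuous.inv₀ h1.norm
      intro p
      have := (hfr p p.2).2
      positivity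
    exact h2.smul h1
  haveI : CompactSpace (frontier K : Set Pt) := by
    rw [← isCompact_iff_compactSpace]
    exact hKcomp.of_isClosed_subset isClosed_frontier hKclosed.frontier_subset
  set e : ↥(frontier K) ≃ ↥(Metric.sphere (0 : Pt) 1) :=
    Equiv.ofBijective f ⟨hinj, hsurj⟩ with he
  have hce : Continuous e := hcont
  exact ⟨hce.homeoOfEquivCompactToT2, fun p => rfl⟩
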